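/- arXiv:1112.1307 — 7 statements merged into one kernel-verified Lean document; each statement's English description precedes it below -/
import Mathlib

section
/- Let X be a topological space, p : X → S continuous to the Sierpinski space, X₀ = p⁻¹(0), X₁ = p⁻¹(1). If U ⊆ X is open, U₀ = U ∩ X₀ and U₁ = U ∩ X₁, then U = interior(U₀ ∪ X₁) ∩ (X₀ ∪ U₁). -/
/-- For a continuous map `p : X → S` to the Sierpinski space
(`Prop` with the Sierpinski topology, open point `True`), with `X₀ = p⁻¹(0)`
open and `X₁ = p⁻¹(1)` closed, any open `U ⊆ X` satisfies
`U = interior (U₀ ∪ X₁) ∩ (X₀ ∪ U₁)` where `U₀ = U ∩ X₀`, `U₁ = U ∩ X₁`. -/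
theorem open_eq_interior_inter_of_sierpinski
    {X : Type*} [TopologicalSpace X] (p : X → Prop) (hp : Continuous p)
    (X₀ X₁ : Set X) (hX₀ : X₀ = {x | p x}) (hX₁ : X₁ = {x | ¬ p x})
    (U : Set X) (hU : IsOpen U) :
    U = interior ((U ∩ X₀) ∪ X₁) ∩ (X₀ ∪ (U ∩ X₁)) := by
  subst hX₀ hX₁
  ext x
  constructor
  · intro hx
    refine ⟨?_, ?_⟩
    · apply interior_maximal ?_ hU hx
      intro y hy
      by_cases h : p y
      · exact Or.inl ⟨hy, h⟩
      · exact Or.inr h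
    · by_cases h : p x
      · exact Or.inl h
      · exact Or.inr ⟨hx, h⟩
  · rintro ⟨hi, hx0 | ⟨hU1, _⟩⟩
    · have := interior_subset hi
      rcases this with ⟨hU0, _⟩ | h1
      · exact hU0
      · exact absurd hx0 h1
    · exact hU1
end

section
/- Let X be a topological space, p : X → S continuous to the Sierpinski space, X₀ = p⁻¹(0), X₁ = p⁻¹(1), and m(U₀) = interior(U₀ ∪ X₁) ∩ X₁ for open U₀ ⊆ X₀. Then a subset U ⊆ X is open in X if and only if U ∩ X₀ is open in X₀, U ∩ X₁ is open in X₁, and U ∩ X₁ ⊆ m(U ∩ X₀). -/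
/-- For a continuous `p : X → S` to the Sierpinski space
(`Prop`, open point `True`), `X₀ = p⁻¹(0)`, `X₁ = p⁻¹(1)`, and
`m U₀ = interior (U₀ ∪ X₁) ∩ X₁`, a subset `U ⊆ X` is open iff `U ∩ X₀` is open
in the subspace `X₀`, `U ∩ X₁` is open in the subspace `X₁`, and
`U ∩ X₁ ⊆ m (U ∩ X₀)`. -/
theorem isOpen_iff_sierpinski_glueing
    {X : Type*} [TopologicalSpace X] (p : X → Prop) (hp : Continuous p)
    (X₀ X₁ : Set X) (hX₀ : X₀ = {x | p x}) (hX₁ : X₁ = {x | ¬ p x})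
    (m : Set X → Set X) (hm : ∀ U, m U = interior (U ∪ X₁) ∩ X₁)
    (U : Set X) :
    IsOpen U ↔
      IsOpen ((Subtype.val : X₀ → X) ⁻¹' U) ∧
      IsOpen ((Subtype.val : X₁ → X) ⁻¹' U) ∧
      U ∩ X₁ ⊆ m (U ∩ X₀) := by
  have hX₀open : IsOpen X₀ := by
    rw [hX₀]
    have h := isOpen_singleton_true.preimage hp
    convert h using 1
    ext x; simp
  have hunion : X₀ ∪ X₁ = Set.univ := by
    rw [hX₀, hX₁]
    ext x; by_cases h : p x <;> simp [h]
  have hcases : ∀ y, y ∈ X₀ ∨ y ∈ X₁ := by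
    intro y; rw [hX₀, hX₁]; by_cases h : p y <;> simp [h]
  constructor
  · intro hU
    refine ⟨hU.preimage continuous_subtype_val, hU.preimage continuous_subtype_val, ?_⟩
    rw [hm]
    intro x hx
    refine ⟨?_, hx.2⟩
    apply interior_mono (show U ⊆ U ∩ X₀ ∪ X₁ by
      intro y hy
      rcases hcases y with ha | hb
      · exact Or.inl ⟨hy, ha⟩
      · exact Or.inr hb)
    rw [hU.interior_eq]; exact hx.1
  · rintro ⟨h0, h1, hsub⟩
    rw [hm] at hsub
    -- U ∩ X₀ is open in X
    have hUX₀ : IsOpen (U ∩ X₀) := by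
      have := hX₀open.isOpenMap_subtype_val _ h0
      rw [Subtype.image_preimage_coe] at this
      rwa [Set.inter_comm] at this
    -- get V open with V ∩ X₁ = U ∩ X₁
    rw [isOpen_induced_iff] at h1
    obtain ⟨V, hV, hVeq⟩ := h1
    have hV1 : V ∩ X₁ = U ∩ X₁ := by
      ext x
      constructor
      · rintro ⟨hxV, hx1⟩
        have : (⟨x, hx1⟩ : X₁) ∈ (Subtype.val ⁻¹' U : Set X₁) := by
          rw [← hVeq]; exact hxV
        exact ⟨this, hx1⟩
      · rintro ⟨hxU, hx1⟩
        have : (⟨x, hx1⟩ : X₁) ∈ (Subtype.val ⁻¹' V : Set X₁) := by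
          rw [hVeq]; exact hxU
        exact ⟨this, hx1⟩
    have key : U = (U ∩ X₀) ∪ (V ∩ interior ((U ∩ X₀) ∪ X₁)) := by
      ext x
      constructor
      · intro hxU
        rcases hcases x with h0' | h1'
        · exact Or.inl ⟨hxU, h0'⟩
        · have hxm := hsub ⟨hxU, h1'⟩
          have hxV : x ∈ V := (hV1.symm ▸ (show x ∈ U ∩ X₁ from ⟨hxU, h1'⟩) : x ∈ V ∩ X₁).1
          exact Or.inr ⟨hxV, hxm.1⟩
      · rintro (⟨hxU, _⟩ | ⟨hxV, hxi⟩)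
        · exact hxU
        · rcases interior_subset hxi with ⟨hxU, _⟩ | h1'
          · exact hxU
          · exact (hV1 ▸ (show x ∈ V ∩ X₁ from ⟨hxV, h1'⟩) : x ∈ U ∩ X₁).1
    rw [key]
    exact hUX₀.union (hV.inter isOpen_interior)
end

section
/- Let X₀, X₁ be topological spaces, m : 𝒪(X₀) → 𝒪(X₁) finite-intersection-preserving, and let X₀ +ₘ X₁ denote the disjoint union X₀ ⊔ X₁ with the glueing topology (U₀ ⊔ U₁ open iff U₀, U₁ open and U₁ ⊆ m(U₀)). Then the canonical inclusion X₀ → X₀ +ₘ X₁ is an open embedding and the canonical inclusion X₁ → X₀ +ₘ X₁ is a closed embedding. -/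
open Topology

/-- For the glueing topology on `X₀ ⊔ X₁` determined by a
finite-intersection-preserving map `m` on open-set lattices (`U₀ ⊔ U₁` open iff
`U₀`, `U₁` open and `U₁ ⊆ m U₀`), the inclusion of `X₀` is an open embedding and
the inclusion of `X₁` is a closed embedding. -/
theorem glueing_inl_isOpenEmbedding_inr_isClosedEmbedding
    {X₀ X₁ : Type*} [TopologicalSpace X₀] [TopologicalSpace X₁]
    (m : Set X₀ → Set X₁)
    (hm_open : ∀ U : Set X₀, IsOpen U → IsOpen (m U))
    (hm_top : m Set.univ = Set.univ)
    (hm_inter : ∀ U V : Set X₀, IsOpen U → IsOpen V → m (U ∩ V) = m U ∩ m V)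
    (t : TopologicalSpace (X₀ ⊕ X₁))
    (ht : ∀ S : Set (X₀ ⊕ X₁),
      IsOpen[t] S ↔
        IsOpen (Sum.inl ⁻¹' S) ∧ IsOpen (Sum.inr ⁻¹' S) ∧
          Sum.inr ⁻¹' S ⊆ m (Sum.inl ⁻¹' S)) :
    @IsOpenEmbedding X₀ (X₀ ⊕ X₁) _ t Sum.inl ∧
      @IsClosedEmbedding X₁ (X₀ ⊕ X₁) _ t Sum.inr := by
  -- images of open sets under inl are open
  have hinl : ∀ U : Set X₀, IsOpen U → IsOpen[t] (Sum.inl '' U) := by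
    intro U hU
    rw [ht]
    have h1 : Sum.inl ⁻¹' (Sum.inl '' U : Set (X₀ ⊕ X₁)) = U :=
      Set.preimage_image_eq _ Sum.inl_injective
    have h2 : Sum.inr ⁻¹' (Sum.inl '' U : Set (X₀ ⊕ X₁)) = ∅ := by
      ext x; simp
    rw [h1, h2]
    exact ⟨hU, isOpen_empty, Set.empty_subset _⟩
  -- sets of form inl '' univ ∪ inr '' V are open
  have hinr : ∀ V : Set X₁, IsOpen V →
      IsOpen[t] (Set.range Sum.inl ∪ Sum.inr '' V) := by
    intro V hV
    rw [ht]
    have h1 : Sum.inl ⁻¹' (Set.range Sum.inl ∪ Sum.inr '' V : Set (X₀ ⊕ X₁))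
        = Set.univ := by ext x; simp
    have h2 : Sum.inr ⁻¹' (Set.range Sum.inl ∪ Sum.inr '' V : Set (X₀ ⊕ X₁))
        = V := by ext x; simp [Sum.inr_injective.eq_iff]
    rw [h1, h2, hm_top]
    exact ⟨isOpen_univ, hV, Set.subset_univ _⟩
  have hindl : @IsInducing X₀ (X₀ ⊕ X₁) _ t Sum.inl := by
    refine ⟨TopologicalSpace.ext_iff.mpr fun U => ?_⟩
    rw [isOpen_induced_iff]
    constructor
    · intro hU
      exact ⟨Sum.inl '' U, hinl U hU, Set.preimage_image_eq _ Sum.inl_injective⟩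
    · rintro ⟨S, hS, rfl⟩
      exact ((ht S).mp hS).1
  have hindr : @IsInducing X₁ (X₀ ⊕ X₁) _ t Sum.inr := by
    refine ⟨TopologicalSpace.ext_iff.mpr fun V => ?_⟩
    rw [isOpen_induced_iff]
    constructor
    · intro hV
      refine ⟨Set.range Sum.inl ∪ Sum.inr '' V, hinr V hV, ?_⟩
      ext x; simp [Sum.inr_injective.eq_iff]
    · rintro ⟨S, hS, rfl⟩
      exact ((ht S).mp hS).2.1
  constructor
  · exact ⟨⟨hindl, Sum.inl_injective⟩, by
      simpa [Set.image_univ] using hinl Set.univ isOpen_univ⟩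
  · refine ⟨⟨hindr, Sum.inr_injective⟩, ?_⟩
    have : (Set.range (Sum.inr : X₁ → X₀ ⊕ X₁))ᶜ = Set.range Sum.inl := by
      ext x; cases x <;> simp
    rw [← isOpen_compl_iff, this]
    simpa [Set.image_univ] using hinl Set.univ isOpen_univ
end

section
/- Let X be a topological space, p : X → S continuous to the Sierpinski space, X₀ = p⁻¹(0), X₁ = p⁻¹(1), m(U₀) = interior(U₀ ∪ X₁) ∩ X₁, and X₀ +ₘ X₁ the glueing of X₀ and X₁ along m. Then the canonical bijection X₀ +ₘ X₁ → X (induced by the subspace inclusions) is a homeomorphism. -/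
open Topology

/-- For a continuous map `p : X → S` to the Sierpinski space
(`Prop`, open point `True`), with `X₀ = p⁻¹(0)`, `X₁ = p⁻¹(1)`,
`m U₀ = interior (U₀ ∪ X₁) ∩ X₁`, and `X₀ +ₘ X₁` the glueing of the subspaces
`X₀` and `X₁` along `m`, the canonical bijection `X₀ +ₘ X₁ → X` induced by the
subspace inclusions is a homeomorphism. -/
theorem glueing_along_sierpinski_map_isHomeomorph
    {X : Type*} [TopologicalSpace X] (p : X → Prop) (hp : Continuous p)
    (X₀ X₁ : Set X) (hX₀ : X₀ = {x | p x}) (hX₁ : X₁ = {x | ¬ p x})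
    (m : Set X → Set X) (hm : ∀ U, m U = interior (U ∪ X₁) ∩ X₁)
    (t : TopologicalSpace (↥X₀ ⊕ ↥X₁))
    (ht : ∀ S : Set (↥X₀ ⊕ ↥X₁),
      IsOpen[t] S ↔
        IsOpen (Sum.inl ⁻¹' S) ∧ IsOpen (Sum.inr ⁻¹' S) ∧
          Subtype.val '' (Sum.inr ⁻¹' S) ⊆ m (Subtype.val '' (Sum.inl ⁻¹' S))) :
    @IsHomeomorph (↥X₀ ⊕ ↥X₁) X t _
      (Sum.elim (Subtype.val : X₀ → X) (Subtype.val : X₁ → X)) := by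
  have hX₀open : IsOpen X₀ := by
    have : X₀ = p ⁻¹' {True} := by
      rw [hX₀]; ext x; simp [eq_iff_iff]
    rw [this]
    exact isOpen_singleton_true.preimage hp
  have hcover : X₀ ∪ X₁ = Set.univ := by
    rw [hX₀, hX₁]; ext x; by_cases h : p x <;> simp [h]
  refine ⟨?_, ?_, ?_, ?_⟩
  · -- continuous
    rw [@continuous_def _ _ t _]
    intro V hV
    rw [ht]
    refine ⟨?_, ?_, ?_⟩
    · exact hV.preimage continuous_subtype_val
    · exact hV.preimage continuous_subtype_val
    · have h1 : (Subtype.val : X₁ → X) ''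
          (Sum.inr ⁻¹' (Sum.elim (Subtype.val : X₀ → X) (Subtype.val : X₁ → X) ⁻¹' V))
          = V ∩ X₁ := by
        rw [show (Sum.inr ⁻¹' (Sum.elim (Subtype.val : X₀ → X) (Subtype.val : X₁ → X) ⁻¹' V))
            = (Subtype.val : X₁ → X) ⁻¹' V from rfl, Subtype.image_preimage_coe,
          Set.inter_comm]
      have h2 : (Subtype.val : X₀ → X) ''
          (Sum.inl ⁻¹' (Sum.elim (Subtype.val : X₀ → X) (Subtype.val : X₁ → X) ⁻¹' V))
          = V ∩ X₀ := by
        rw [show (Sum.inl ⁻¹' (Sum.elim (Subtype.val : X₀ → X) (Subtype.val : X₁ → X) ⁻¹' V))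
            = (Subtype.val : X₀ → X) ⁻¹' V from rfl, Subtype.image_preimage_coe,
          Set.inter_comm]
      rw [h1, h2, hm]
      have hsub : V ⊆ interior (V ∩ X₀ ∪ X₁) := by
        apply interior_maximal _ hV
        intro x hx
        rcases (hcover ▸ Set.mem_univ x : x ∈ X₀ ∪ X₁) with h | h
        · exact Or.inl ⟨hx, h⟩
        · exact Or.inr h
      exact fun x ⟨hxV, hx1⟩ => ⟨hsub hxV, hx1⟩
  · -- open map
    intro S hS
    rw [ht] at hS
    obtain ⟨h1, h2, h3⟩ := hS
    set A := (Subtype.val : X₀ → X) '' (Sum.inl ⁻¹' S) with hA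
    set B := (Subtype.val : X₁ → X) '' (Sum.inr ⁻¹' S) with hB
    have himg : Sum.elim (Subtype.val : X₀ → X) (Subtype.val : X₁ → X) '' S = A ∪ B := by
      ext x
      simp only [Set.mem_image, Set.mem_union, hA, hB, Set.mem_preimage]
      constructor
      · rintro ⟨(a | b), hmem, rfl⟩
        · exact Or.inl ⟨a, hmem, rfl⟩
        · exact Or.inr ⟨b, hmem, rfl⟩
      · rintro (⟨a, hmem, rfl⟩ | ⟨b, hmem, rfl⟩)
        · exact ⟨Sum.inl a, hmem, rfl⟩
        · exact ⟨Sum.inr b, hmem, rfl⟩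
    rw [himg]
    have hAopen : IsOpen A := hX₀open.isOpenMap_subtype_val _ h1
    obtain ⟨W, hWopen, hWpre⟩ := isOpen_induced_iff.mp h2
    have hBW : B = W ∩ X₁ := by
      rw [hB, ← hWpre, Subtype.image_preimage_coe, Set.inter_comm]
    rw [hm] at h3
    have key : A ∪ B = A ∪ (W ∩ interior (A ∪ X₁)) := by
      apply Set.Subset.antisymm
      · refine Set.union_subset_union_right A ?_
        intro x hx
        refine ⟨(hBW ▸ hx).1, (h3 hx).1⟩
      · refine Set.union_subset (Set.subset_union_left) ?_
        intro x ⟨hxW, hxI⟩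
        rcases interior_subset hxI with h | h
        · exact Or.inl h
        · exact Or.inr (hBW ▸ ⟨hxW, h⟩)
    rw [key]
    exact hAopen.union (hWopen.inter isOpen_interior)
  · -- injective
    rintro (a | a) (b | b) hab <;>
      simp only [Sum.elim_inl, Sum.elim_inr] at hab
    · exact congrArg Sum.inl (Subtype.ext hab)
    · have ha : p a.1 := hX₀ ▸ a.2
      have hb : ¬ p b.1 := hX₁ ▸ b.2
      rw [hab] at ha; exact absurd ha hb
    · have ha : ¬ p a.1 := hX₁ ▸ a.2
      have hb : p b.1 := hX₀ ▸ b.2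
      rw [hab] at ha; exact absurd hb ha
    · exact congrArg Sum.inr (Subtype.ext hab)
  · -- surjective
    intro x
    by_cases h : p x
    · exact ⟨Sum.inl ⟨x, hX₀ ▸ h⟩, rfl⟩
    · exact ⟨Sum.inr ⟨x, hX₁ ▸ h⟩, rfl⟩
end

section
/- Let B be a poset and for each b ∈ B a topological space F(b), and for each b ≤ b' a finite-intersection-preserving map F^b_{b'} : 𝒪(F(b)) → 𝒪(F(b')) with F^b_b = id and F^{b'}_{b''}(F^b_{b'}(U)) ⊆ F^b_{b''}(U) for b ≤ b' ≤ b''. Then the collection of subsets U of Σ_{b∈B} F(b) such that each U_b = {x | (x,b) ∈ U} is open in F(b) and U_{b'} ⊆ F^b_{b'}(U_b) for all b ≤ b', forms a topology on Σ_{b∈B} F(b); moreover each inclusion i_b : F(b) → Σ_{b∈B} F(b), x ↦ (x,b), is continuous with respect to it. -/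
open Topology

/-- Given a poset `B`, spaces `F b`, and finite-intersection
preserving maps `m h : 𝒪(F b) → 𝒪(F b')` for `h : b ≤ b'` with `m (refl) = id`
and `m h' (m h U) ⊆ m (h.trans h') U`, the sets `U ⊆ Σ b, F b` such that each
fiber `Sigma.mk b ⁻¹' U` is open and `Sigma.mk b' ⁻¹' U ⊆ m h (Sigma.mk b ⁻¹' U)`
for all `h : b ≤ b'` form a topology, for which each inclusion
`i_b = Sigma.mk b : F b → Σ b, F b` is continuous. -/
theorem lax_colimit_topology_exists
    {B : Type*} [PartialOrder B] (F : B → Type*) [∀ b, TopologicalSpace (F b)]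
    (m : ∀ ⦃b b' : B⦄, b ≤ b' → Set (F b) → Set (F b'))
    (hm_open : ∀ ⦃b b'⦄ (h : b ≤ b') (U : Set (F b)), IsOpen U → IsOpen (m h U))
    (hm_top : ∀ ⦃b b'⦄ (h : b ≤ b'), m h Set.univ = Set.univ)
    (hm_inter : ∀ ⦃b b'⦄ (h : b ≤ b') (U V : Set (F b)), IsOpen U → IsOpen V →
      m h (U ∩ V) = m h U ∩ m h V)
    (hm_id : ∀ (b : B) (U : Set (F b)), m (le_refl b) U = U)
    (hm_comp : ∀ ⦃b b' b''⦄ (h : b ≤ b') (h' : b' ≤ b'') (U : Set (F b)),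
      IsOpen U → m h' (m h U) ⊆ m (h.trans h') U) :
    ∃ t : TopologicalSpace (Σ b, F b),
      (∀ U : Set (Σ b, F b),
        IsOpen[t] U ↔
          (∀ b, IsOpen (Sigma.mk b ⁻¹' U)) ∧
          (∀ ⦃b b'⦄ (h : b ≤ b'), Sigma.mk b' ⁻¹' U ⊆ m h (Sigma.mk b ⁻¹' U))) ∧
      (∀ b : B, Continuous[_, t] (Sigma.mk b)) := by
  -- monotonicity of m on open sets
  have hmono : ∀ ⦃b b'⦄ (h : b ≤ b') (U V : Set (F b)), IsOpen U → IsOpen V →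
      U ⊆ V → m h U ⊆ m h V := by
    intro b b' h U V hU hV hUV
    have : U ∩ V = U := Set.inter_eq_left.2 hUV
    calc m h U = m h (U ∩ V) := by rw [this]
      _ = m h U ∩ m h V := hm_inter h U V hU hV
      _ ⊆ m h V := Set.inter_subset_right
  refine ⟨{
    IsOpen := fun U => (∀ b, IsOpen (Sigma.mk b ⁻¹' U)) ∧
      (∀ ⦃b b'⦄ (h : b ≤ b'), Sigma.mk b' ⁻¹' U ⊆ m h (Sigma.mk b ⁻¹' U)),
    isOpen_univ := by
      refine ⟨fun b => isOpen_univ, ?_⟩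
      intro b b' h
      simp [hm_top h]
    isOpen_inter := by
      rintro U V ⟨hU1, hU2⟩ ⟨hV1, hV2⟩
      refine ⟨fun b => (hU1 b).inter (hV1 b), ?_⟩
      intro b b' h
      rw [Set.preimage_inter, Set.preimage_inter,
        hm_inter h _ _ (hU1 b) (hV1 b)]
      exact Set.inter_subset_inter (hU2 h) (hV2 h)
    isOpen_sUnion := by
      intro S hS
      refine ⟨fun b => ?_, ?_⟩
      · rw [Set.preimage_sUnion]
        exact isOpen_biUnion fun U hU => (hS U hU).1 b
      · intro b b' h x hx
        rw [Set.preimage_sUnion] at hx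
        obtain ⟨U, hU, hxU⟩ := Set.mem_iUnion₂.1 hx
        have h1 : x ∈ m h (Sigma.mk b ⁻¹' U) := (hS U hU).2 h hxU
        refine hmono h _ _ ((hS U hU).1 b) ?_ ?_ h1
        · rw [Set.preimage_sUnion]
          exact isOpen_biUnion fun V hV => (hS V hV).1 b
        · intro y hy
          rw [Set.preimage_sUnion]
          exact Set.mem_biUnion hU hy
  }, fun U => Iff.rfl, fun b => ?_⟩
  exact continuous_def.2 fun U hU => hU.1 b
end

section
/- Let X be a topological space and U ⊆ X an open subset. Then the subspace inclusion i : U → X is an exponentiable morphism in the category of topological spaces: the pullback functor along any map composed with i, i.e., the functor Top/X → Top/X given by pulling back to U and then composing with i (equivalently, (− ×_X U) : Top/X → Top/X), has a right adjoint. -/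
open CategoryTheory

section Auxiliary

open CategoryTheory.Limits TopologicalSpace

universe u

lemma inl_mem_inl_image {α β : Type*} {S : Set α} {z : α} :
    (Sum.inl z : α ⊕ β) ∈ Sum.inl '' S ↔ z ∈ S := Sum.inl_injective.mem_set_image
lemma inr_mem_inl_image {α β : Type*} {S : Set α} {x : β} :
    (Sum.inr x : α ⊕ β) ∈ Sum.inl '' S ↔ False := by simp
lemma inl_mem_inr_image {α β : Type*} {S : Set β} {z : α} :
    (Sum.inl z : α ⊕ β) ∈ Sum.inr '' S ↔ False := by simp
lemma inr_mem_inr_image {α β : Type*} {S : Set β} {x : β} :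
    (Sum.inr x : α ⊕ β) ∈ Sum.inr '' S ↔ x ∈ S := Sum.inr_injective.mem_set_image

noncomputable section

attribute [local instance] Classical.propDecidable

variable {X : TopCat.{u}} (U : Set X)

lemma whom {A B : Over X} (ψ : A ⟶ B) (y : A.left) : B.hom (ψ.left y) = A.hom y :=
  ConcreteCategory.congr_hom (Over.w ψ) y

def gens (B : Over X) :
    Set (Set ((B.hom ⁻¹' U : Set B.left) ⊕ (Uᶜ : Set X))) :=
  {W | ∃ O : Set (B.hom ⁻¹' U : Set B.left), IsOpen O ∧ W = Sum.inl '' O} ∪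
  {W | ∃ V : Set X, IsOpen V ∧
      W = Sum.inl '' {z | B.hom z.1 ∈ V} ∪ Sum.inr '' {x | x.1 ∈ V}}

abbrev GT (B : Over X) : TopCat.{u} :=
  @TopCat.of ((B.hom ⁻¹' U : Set B.left) ⊕ (Uᶜ : Set X)) (generateFrom (gens U B))

lemma isOpen_gen {B : Over X} {W : Set ((B.hom ⁻¹' U : Set B.left) ⊕ (Uᶜ : Set X))}
    (hW : W ∈ gens U B) : @IsOpen _ (GT U B).str W :=
  isOpen_generateFrom_of_mem hW

def gproj (B : Over X) : GT U B ⟶ X :=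
  @TopCat.ofHom _ _ (generateFrom (gens U B)) _ (@ContinuousMap.mk _ _ (generateFrom (gens U B)) _ (Sum.elim (fun z => B.hom z.1) Subtype.val) (by
    rw [continuous_def]
    intro V hV
    have : Sum.elim (fun (z : (B.hom ⁻¹' U : Set B.left)) => B.hom z.1)
        (Subtype.val : (Uᶜ : Set X) → X) ⁻¹' V
        = Sum.inl '' {z | B.hom z.1 ∈ V} ∪ Sum.inr '' {x | x.1 ∈ V} := by
      ext (z | x) <;> simp
    rw [this]
    exact isOpen_gen U (Or.inr ⟨V, hV, rfl⟩)))

abbrev GObj (B : Over X) : Over X := Over.mk (gproj U B)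

def rFun {A B : Over X} (ψ : A ⟶ B) :
    (A.hom ⁻¹' U : Set A.left) → (B.hom ⁻¹' U : Set B.left) :=
  fun y => ⟨ψ.left y.1, show B.hom (ψ.left y.1) ∈ U by rw [whom ψ]; exact y.2⟩

lemma rFun_continuous {A B : Over X} (ψ : A ⟶ B) : Continuous (rFun U ψ) := by
  apply Continuous.subtype_mk; fun_prop

def gmap {A B : Over X} (ψ : A ⟶ B) : GT U A ⟶ GT U B :=
  @TopCat.ofHom _ _ (generateFrom (gens U A)) (generateFrom (gens U B)) (@ContinuousMap.mk _ _ (generateFrom (gens U A)) (generateFrom (gens U B)) (Sum.map (rFun U ψ) id) (by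
    apply continuous_generateFrom_iff.mpr
    rintro W (⟨O, hO, rfl⟩ | ⟨V, hV, rfl⟩)
    · have : Sum.map (rFun U ψ) (id : (Uᶜ : Set X) → (Uᶜ : Set X)) ⁻¹' (Sum.inl '' O)
          = Sum.inl '' (rFun U ψ ⁻¹' O) := by
        ext (z | x) <;>
          simp only [Sum.map_inl, Sum.map_inr, Set.mem_preimage,
            inl_mem_inl_image, inr_mem_inl_image, id_eq]
      rw [this]
      exact isOpen_gen U (Or.inl ⟨_, hO.preimage (rFun_continuous U ψ), rfl⟩)
    · have : Sum.map (rFun U ψ) (id : (Uᶜ : Set X) → (Uᶜ : Set X)) ⁻¹'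
          (Sum.inl '' {z | B.hom z.1 ∈ V} ∪ Sum.inr '' {x | x.1 ∈ V})
          = Sum.inl '' {z | A.hom z.1 ∈ V} ∪ Sum.inr '' {x | x.1 ∈ V} := by
        ext (z | x) <;>
          simp only [Sum.map_inl, Sum.map_inr, Set.mem_preimage, Set.mem_union,
            inl_mem_inl_image, inr_mem_inl_image, inl_mem_inr_image, inr_mem_inr_image,
            Set.mem_setOf_eq, id_eq, false_or, or_false, rFun, whom ψ]
      rw [this]
      exact isOpen_gen U (Or.inr ⟨V, hV, rfl⟩)))

def G : Over X ⥤ Over X where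
  obj B := GObj U B
  map {A B} ψ := Over.homMk (gmap U ψ) (by
    ext (z | x)
    · exact whom ψ z.1
    · rfl)
  map_id B := by
    apply Over.OverMorphism.ext
    ext (z | x) <;> rfl
  map_comp ψ φ := by
    apply Over.OverMorphism.ext
    ext (z | x) <;> rfl

abbrev rObj (A : Over X) : Over X :=
  Over.mk (Y := TopCat.of (A.hom ⁻¹' U : Set A.left))
    (TopCat.ofHom ⟨fun y => A.hom y.1, A.hom.hom.continuous.comp continuous_subtype_val⟩)

def rMap {A B : Over X} (ψ : A ⟶ B) : (rObj U A) ⟶ (rObj U B) :=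
  Over.homMk (TopCat.ofHom ⟨rFun U ψ, rFun_continuous U ψ⟩) (by ext y; exact whom ψ y.1)

def Fr : Over X ⥤ Over X where
  obj A := rObj U A
  map ψ := rMap U ψ

/-- the "pick" function -/
def pick {B : Over X} : ∀ w : (B.hom ⁻¹' U : Set B.left) ⊕ (Uᶜ : Set X),
    Sum.elim (fun z => B.hom z.1) Subtype.val w ∈ U → (B.hom ⁻¹' U : Set B.left)
  | .inl z, _ => z
  | .inr x, hw => absurd hw x.2

lemma pick_spec {B : Over X} (w) (hw) : Sum.inl (pick U (B := B) w hw) = w := by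
  cases w with
  | inl z => rfl
  | inr x => exact absurd hw x.2

-- forward direction of the hom equivalence
def fwdFun {A B : Over X} (h : rObj U A ⟶ B) : A.left → GT U B :=
  fun y => if hy : A.hom y ∈ U then
    Sum.inl ⟨h.left ⟨y, hy⟩, show B.hom (h.left ⟨y, hy⟩) ∈ U by rw [whom h]; exact hy⟩
  else Sum.inr ⟨A.hom y, hy⟩

lemma whom' {A B : Over X} (h : rObj U A ⟶ B) (y : (A.hom ⁻¹' U : Set A.left)) :
    B.hom (h.left y) = A.hom y.1 := whom h y

lemma fwdFun_pos {A B : Over X} (h : rObj U A ⟶ B) (y : A.left) (hyU : A.hom y ∈ U) :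
    fwdFun U h y = Sum.inl ⟨h.left ⟨y, hyU⟩,
      show B.hom (h.left ⟨y, hyU⟩) ∈ U by rw [whom' U h]; exact hyU⟩ := dif_pos hyU

lemma fwdFun_neg {A B : Over X} (h : rObj U A ⟶ B) (y : A.left) (hyU : A.hom y ∉ U) :
    fwdFun U h y = Sum.inr ⟨A.hom y, hyU⟩ := dif_neg hyU

lemma fwd_continuous (hU : IsOpen U) {A B : Over X} (h : rObj U A ⟶ B) :
    @Continuous A.left (GT U B) _ (GT U B).str (fwdFun U h) := by
  apply continuous_generateFrom_iff.mpr
  rintro W (⟨O, hO, rfl⟩ | ⟨V, hV, rfl⟩)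
  · have : fwdFun U h ⁻¹' (Sum.inl '' O)
        = Subtype.val '' ((fun y : (A.hom ⁻¹' U : Set A.left) =>
            (⟨h.left y, show B.hom (h.left y) ∈ U by rw [whom h]; exact y.2⟩ :
              (B.hom ⁻¹' U : Set B.left))) ⁻¹' O) := by
      ext y
      constructor
      · rintro ⟨o, hoO, ho⟩
        by_cases hyU : A.hom y ∈ U
        · refine ⟨⟨y, hyU⟩, ?_, rfl⟩
          have he : fwdFun U h y = Sum.inl
              ⟨h.left ⟨y, hyU⟩, show B.hom (h.left ⟨y, hyU⟩) ∈ U by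
                rw [whom h]; exact hyU⟩ := dif_pos hyU
          rw [he] at ho
          have := Sum.inl.inj ho
          show (⟨h.left ⟨y, hyU⟩, _⟩ : (B.hom ⁻¹' U : Set B.left)) ∈ O
          rwa [← this]
        · exfalso
          have he : fwdFun U h y = Sum.inr ⟨A.hom y, hyU⟩ := dif_neg hyU
          rw [he] at ho
          exact Sum.inl_ne_inr ho
      · rintro ⟨y', hy', rfl⟩
        exact ⟨_, hy', (fwdFun_pos U h y'.1 y'.2).symm⟩
    rw [this]
    exact (hU.preimage A.hom.hom.continuous).isOpenMap_subtype_val _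
      (hO.preimage (by fun_prop))
  · have : fwdFun U h ⁻¹' (Sum.inl '' {z | B.hom z.1 ∈ V} ∪ Sum.inr '' {x | x.1 ∈ V})
        = A.hom ⁻¹' V := by
      ext y
      constructor
      · rintro (⟨z, hz, hzeq⟩ | ⟨x, hx, hxeq⟩)
        · by_cases hyU : A.hom y ∈ U
          · have he : fwdFun U h y = Sum.inl
                ⟨h.left ⟨y, hyU⟩, show B.hom (h.left ⟨y, hyU⟩) ∈ U by
                  rw [whom h]; exact hyU⟩ := dif_pos hyU
            rw [he] at hzeq
            have hz2 := Sum.inl.inj hzeq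
            show A.hom y ∈ V
            rw [← whom' U h ⟨y, hyU⟩]
            rw [hz2] at hz
            exact hz
          · have he : fwdFun U h y = Sum.inr ⟨A.hom y, hyU⟩ := dif_neg hyU
            rw [he] at hzeq
            exact absurd hzeq Sum.inl_ne_inr
        · by_cases hyU : A.hom y ∈ U
          · have he : fwdFun U h y = Sum.inl
                ⟨h.left ⟨y, hyU⟩, show B.hom (h.left ⟨y, hyU⟩) ∈ U by
                  rw [whom h]; exact hyU⟩ := dif_pos hyU
            rw [he] at hxeq
            exact absurd hxeq.symm Sum.inl_ne_inr
          · have he : fwdFun U h y = Sum.inr ⟨A.hom y, hyU⟩ := dif_neg hyU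
            rw [he] at hxeq
            have hx2 := Sum.inr.inj hxeq
            rw [hx2] at hx
            exact hx
      · intro hyV
        by_cases hyU : A.hom y ∈ U
        · exact Or.inl ⟨⟨h.left ⟨y, hyU⟩, show B.hom (h.left ⟨y, hyU⟩) ∈ U by
              rw [whom' U h]; exact hyU⟩,
            show B.hom (h.left ⟨y, hyU⟩) ∈ V by rw [whom' U h]; exact hyV,
            (fwdFun_pos U h y hyU).symm⟩
        · exact Or.inr ⟨⟨A.hom y, hyU⟩, hyV, (fwdFun_neg U h y hyU).symm⟩
    rw [this]
    exact hV.preimage A.hom.hom.continuous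

def fwd (hU : IsOpen U) {A B : Over X} (h : rObj U A ⟶ B) : A ⟶ GObj U B :=
  Over.homMk (@TopCat.ofHom _ _ _ (generateFrom (gens U B)) (@ContinuousMap.mk _ _ _ (generateFrom (gens U B)) (fwdFun U h) (fwd_continuous U hU h))) (by
    ext y
    show Sum.elim _ _ (fwdFun U h y) = A.hom y
    by_cases hyU : A.hom y ∈ U
    · simp only [fwdFun, dif_pos hyU]
      exact whom h ⟨y, hyU⟩
    · simp only [fwdFun, dif_neg hyU]
      rfl)

-- backward direction
def bwdFun {A B : Over X} (k : A ⟶ GObj U B) :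
    (A.hom ⁻¹' U : Set A.left) → (B.hom ⁻¹' U : Set B.left) :=
  fun y => pick U (k.left y.1) (Set.mem_of_eq_of_mem (whom k y.1) y.2)

lemma bwdFun_spec {A B : Over X} (k : A ⟶ GObj U B) (y) :
    Sum.inl (bwdFun U k y) = k.left y.1 := pick_spec U _ _

lemma bwd_continuous {A B : Over X} (k : A ⟶ GObj U B) : Continuous (bwdFun U k) := by
  rw [continuous_def]
  intro O hO
  have : bwdFun U k ⁻¹' O
      = (fun y : (A.hom ⁻¹' U : Set A.left) => k.left y.1) ⁻¹' (Sum.inl '' O) := by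
    ext y
    rw [Set.mem_preimage, Set.mem_preimage, ← bwdFun_spec U k y, inl_mem_inl_image]
  rw [this]
  exact (k.left.hom.continuous.comp continuous_subtype_val).isOpen_preimage _
    (isOpen_gen U (Or.inl ⟨O, hO, rfl⟩))

def bwd {A B : Over X} (k : A ⟶ GObj U B) : rObj U A ⟶ B :=
  Over.homMk (TopCat.ofHom ⟨fun y => (bwdFun U k y).1, continuous_subtype_val.comp (bwd_continuous U k)⟩)
    (by
      ext y
      show B.hom (bwdFun U k y).1 = A.hom y.1
      have h1 : Sum.elim (fun z : (B.hom ⁻¹' U : Set B.left) => B.hom z.1)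
          (Subtype.val : (Uᶜ : Set X) → X) (Sum.inl (bwdFun U k y)) = B.hom (bwdFun U k y).1 := rfl
      rw [← h1, bwdFun_spec U k y]
      exact whom k y.1)

def homEquivFrG (hU : IsOpen U) (A B : Over X) : (rObj U A ⟶ B) ≃ (A ⟶ GObj U B) where
  toFun := fwd U hU
  invFun := bwd U
  left_inv h := by
    apply Over.OverMorphism.ext
    ext y
    show (bwdFun U (fwd U hU h) y).1 = h.left y
    have h1 : Sum.inl (bwdFun U (fwd U hU h) y) = fwdFun U h y.1 := bwdFun_spec U _ y
    rw [fwdFun_pos U h y.1 y.2] at h1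
    have h2 := Sum.inl.inj h1
    have h3 := congrArg Subtype.val h2
    simpa using h3
  right_inv k := by
    apply Over.OverMorphism.ext
    ext y
    show fwdFun U (bwd U k) y = k.left y
    by_cases hyU : A.hom y ∈ U
    · rw [fwdFun_pos U _ y hyU]
      have hs := bwdFun_spec U k ⟨y, hyU⟩
      exact (congrArg Sum.inl (Subtype.ext rfl)).trans hs
    · rw [fwdFun_neg U _ y hyU]
      have hk := whom k y
      cases hkl : k.left y with
      | inl z =>
        exfalso
        rw [hkl] at hk
        exact hyU (Set.mem_of_eq_of_mem hk.symm z.2)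
      | inr x =>
        rw [hkl] at hk
        exact congrArg Sum.inr (Subtype.ext hk.symm)

def adjFrG (hU : IsOpen U) : Fr U ⊣ G U :=
  Adjunction.mkOfHomEquiv
    { homEquiv := homEquivFrG U hU
      homEquiv_naturality_left_symm := by
        intro A' A B ψ k
        apply Over.OverMorphism.ext
        ext y
        rfl
      homEquiv_naturality_right := by
        intro A B B' h φ
        apply Over.OverMorphism.ext
        ext y
        show fwdFun U (h ≫ φ) y = Sum.map (rFun U φ) id (fwdFun U h y)
        by_cases hyU : A.hom y ∈ U
        · rw [fwdFun_pos U _ y hyU, fwdFun_pos U h y hyU]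
          rfl
        · rw [fwdFun_neg U _ y hyU, fwdFun_neg U h y hyU]
          rfl }

def incl (U : Set X) : TopCat.of U ⟶ X := TopCat.ofHom ⟨Subtype.val, continuous_subtype_val⟩

def coneFst (A : Over X) : TopCat.of (A.hom ⁻¹' U : Set A.left) ⟶ A.left :=
  TopCat.ofHom ⟨Subtype.val, continuous_subtype_val⟩

def coneSnd (A : Over X) : TopCat.of (A.hom ⁻¹' U : Set A.left) ⟶ TopCat.of U :=
  TopCat.ofHom ⟨fun y => ⟨A.hom y.1, y.2⟩, by fun_prop⟩

lemma cone_eq (A : Over X) : coneFst U A ≫ A.hom = coneSnd U A ≫ incl U := by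
  ext y; rfl

def coneA (A : Over X) : PullbackCone A.hom (incl U) :=
  PullbackCone.mk _ _ (cone_eq U A)

def limA (A : Over X) : IsLimit (coneA U A) :=
  PullbackCone.IsLimit.mk (cone_eq U A)
    (fun s => TopCat.ofHom ⟨fun w => ⟨s.fst w,
        show A.hom (s.fst w) ∈ U from
          Set.mem_of_eq_of_mem (ConcreteCategory.congr_hom s.condition w) (s.snd w).2⟩,
      Continuous.subtype_mk s.fst.hom.continuous _⟩)
    (fun s => by ext w; rfl)
    (fun s => by ext w; exact ConcreteCategory.congr_hom s.condition w)
    (fun s m h1 h2 => by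
      ext w
      exact ConcreteCategory.congr_hom h1 w)

def isoP (A : Over X) : Limits.pullback A.hom (incl U) ≅ TopCat.of (A.hom ⁻¹' U : Set A.left) :=
  (pullbackIsPullback A.hom (incl U)).conePointUniqueUpToIso (limA U A)

lemma isoP_hom_fst (A : Over X) :
    (isoP U A).hom ≫ coneFst U A = pullback.fst A.hom (incl U) :=
  IsLimit.conePointUniqueUpToIso_hom_comp
    (pullbackIsPullback A.hom (incl U)) (limA U A) WalkingCospan.left

lemma isoP_hom_snd (A : Over X) :
    (isoP U A).hom ≫ coneSnd U A = pullback.snd A.hom (incl U) :=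
  IsLimit.conePointUniqueUpToIso_hom_comp
    (pullbackIsPullback A.hom (incl U)) (limA U A) WalkingCospan.right

lemma coneSnd_incl (A : Over X) : coneSnd U A ≫ incl U = (rObj U A).hom := by
  ext y; rfl

def eIso (A : Over X) :
    (Over.pullback (incl U) ⋙ Over.map (incl U)).obj A ≅ (Fr U).obj A :=
  Over.isoMk (isoP U A) (by
    show (isoP U A).hom ≫ (rObj U A).hom = pullback.snd A.hom (incl U) ≫ incl U
    rw [← coneSnd_incl, ← Category.assoc, isoP_hom_snd])

lemma rMap_fst {A A' : Over X} (ψ : A ⟶ A') :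
    (rMap U ψ).left ≫ coneFst U A' = coneFst U A ≫ ψ.left := by
  ext y; rfl

lemma rMap_snd {A A' : Over X} (ψ : A ⟶ A') :
    (rMap U ψ).left ≫ coneSnd U A' = coneSnd U A := by
  ext y; exact whom ψ y.1

def eNat : (Over.pullback (incl U) ⋙ Over.map (incl U)) ≅ Fr U :=
  NatIso.ofComponents (eIso U) (by
    intro A A' ψ
    apply Over.OverMorphism.ext
    show ((Over.pullback (incl U) ⋙ Over.map (incl U)).map ψ).left ≫ (isoP U A').hom
        = (isoP U A).hom ≫ (rMap U ψ).left
    apply PullbackCone.IsLimit.hom_ext (limA U A')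
    · show _ ≫ coneFst U A' = _ ≫ coneFst U A'
      rw [Category.assoc, Category.assoc, isoP_hom_fst, rMap_fst, ← Category.assoc,
        isoP_hom_fst]
      show ((Over.pullback (incl U)).map ψ).left ≫ pullback.fst A'.hom (incl U)
          = pullback.fst A.hom (incl U) ≫ ψ.left
      dsimp [Over.pullback]
      simp
      exact pullback.lift_fst _ _ _
    · show _ ≫ coneSnd U A' = _ ≫ coneSnd U A'
      rw [Category.assoc, Category.assoc, isoP_hom_snd, rMap_snd, isoP_hom_snd]
      show ((Over.pullback (incl U)).map ψ).left ≫ pullback.snd A'.hom (incl U)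
          = pullback.snd A.hom (incl U)
      dsimp [Over.pullback]
      simp
      exact pullback.lift_snd _ _ _)

lemma main (hU : IsOpen U) :
    (Over.pullback (incl U) ⋙ Over.map (incl U)).IsLeftAdjoint :=
  ⟨G U, ⟨(adjFrG U hU).ofNatIsoLeft (eNat U).symm⟩⟩

end

end Auxiliary

/-- The inclusion of an open subspace `U → X` is an
exponentiable morphism in `Top`: the functor `− ×_X U : Top/X → Top/X`
(pullback along the inclusion followed by postcomposition with it) has a
right adjoint. -/
theorem open_inclusion_exponentiable
    (X : TopCat) (U : Set X) (hU : IsOpen U)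
    (i : TopCat.of U ⟶ X)
    (hi : ∀ u : U, i u = (u : X)) :
    (Over.pullback i ⋙ Over.map i).IsLeftAdjoint := by
  have h : i = incl U := by ext u; exact hi u
  rw [h]
  exact main U hU
end

section
/- Let X be a topological space and A ⊆ X a locally closed subset (i.e., A = U ∩ C with U open and C closed in X; equivalently, A is open in its closure). Then the subspace inclusion A → X is an exponentiable morphism in Top: the functor − ×_X A : Top/X → Top/X has a right adjoint. -/
noncomputable section LCExp

open CategoryTheory CategoryTheory.Limits Set Topology
open scoped Classical

universe u

variable {X : TopCat.{u}} (A : Set X)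

/-- Underlying type of the partial-product (exponential) space. -/
abbrev PT (Z : Over X) : Type u :=
  {z : Z.left // Z.hom z ∈ A} ⊕ {x : X // x ∉ A}

/-- Projection to the base. -/
def pmap (Z : Over X) : PT A Z → X :=
  Sum.elim (fun z => Z.hom z.1) Subtype.val

/-- The exterior part appearing in the first kind of generating open sets. -/
def extPart : Set X := coborder A \ closure A

/-- First kind of generating open set. -/
def gen1 (Z : Over X) (W : Set Z.left) : Set (PT A Z) :=
  Sum.inl '' {z | z.1 ∈ W} ∪ Sum.inr '' {x | x.1 ∈ extPart A}

@[simp] lemma mem_gen1_inl (Z : Over X) (W : Set Z.left) (z : {z : Z.left // Z.hom z ∈ A}) :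
    Sum.inl z ∈ gen1 A Z W ↔ z.1 ∈ W := by
  constructor
  · rintro (⟨z', hz', hzz⟩ | ⟨x, hx, hxx⟩)
    · cases hzz; exact hz'
    · exact absurd hxx (by simp)
  · intro hz
    exact Or.inl ⟨z, hz, rfl⟩

@[simp] lemma mem_gen1_inr (Z : Over X) (W : Set Z.left) (x : {x : X // x ∉ A}) :
    Sum.inr x ∈ gen1 A Z W ↔ x.1 ∈ extPart A := by
  constructor
  · rintro (⟨z', hz', hzz⟩ | ⟨x', hx', hxx⟩)
    · exact absurd hzz (by simp)
    · cases hxx; exact hx'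
  · intro hx
    exact Or.inr ⟨x, hx, rfl⟩

/-- The exponential topology. -/
instance ptop (Z : Over X) : TopologicalSpace (PT A Z) :=
  TopologicalSpace.generateFrom
    ({s | ∃ W : Set Z.left, IsOpen W ∧ s = gen1 A Z W} ∪
     {s | ∃ V : Set X, IsOpen V ∧ s = pmap A Z ⁻¹' V})

lemma isOpen_gen1 (Z : Over X) {W : Set Z.left} (hW : IsOpen W) :
    IsOpen (gen1 A Z W) :=
  TopologicalSpace.GenerateOpen.basic _ (Or.inl ⟨W, hW, rfl⟩)

lemma isOpen_pmap_preimage (Z : Over X) {V : Set X} (hV : IsOpen V) :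
    IsOpen (pmap A Z ⁻¹' V) :=
  TopologicalSpace.GenerateOpen.basic _ (Or.inr ⟨V, hV, rfl⟩)

/-- The partial-product space as an object of `TopCat`. -/
def PTop (Z : Over X) : TopCat.{u} :=
  TopCat.of (PT A Z)

/-- The projection as a morphism of `TopCat`. -/
def pHom (Z : Over X) : PTop A Z ⟶ X :=
  TopCat.ofHom (ContinuousMap.mk (pmap A Z) (by
    rw [continuous_def]
    intro V hV
    exact isOpen_pmap_preimage A Z hV))

@[simp] lemma pHom_apply (Z : Over X) (w : PT A Z) : pHom A Z w = pmap A Z w := rfl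

/-- Extraction of the fibre part over points of `A`. -/
def pext (Z : Over X) : {w : PT A Z // pmap A Z w ∈ A} → Z.left := fun w =>
  match w with
  | ⟨Sum.inl z, _⟩ => z.1
  | ⟨Sum.inr x, h⟩ => absurd h x.2

lemma Zhom_pext (Z : Over X) (w : {w : PT A Z // pmap A Z w ∈ A}) :
    Z.hom (pext A Z w) = pmap A Z w.1 := by
  rcases w with ⟨(z | x), h⟩
  · rfl
  · exact absurd h x.2

lemma pext_continuous (Z : Over X) : Continuous (pext A Z) := by
  rw [continuous_def]
  intro W hW
  have : pext A Z ⁻¹' W = Subtype.val ⁻¹' gen1 A Z W := by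
    ext ⟨(z | x), h⟩
    · show z.1 ∈ W ↔ _
      exact (mem_gen1_inl A Z W z).symm
    · exact absurd h x.2
  rw [this]
  exact (isOpen_gen1 A Z hW).preimage continuous_subtype_val

lemma extPart_isOpen (hA : IsLocallyClosed A) : IsOpen (extPart A) :=
  hA.isOpen_coborder.sdiff isClosed_closure

lemma mem_extPart_of_coborder {x : X} (hx : x ∈ coborder A) (hx' : x ∉ A) :
    x ∈ extPart A := by
  refine ⟨hx, fun hc => hx' ?_⟩
  rw [← coborder_inter_closure (s := A)]
  exact ⟨hx, hc⟩

lemma extPart_disjoint {x : X} (hx : x ∈ extPart A) : x ∉ A :=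
  fun hxA => hx.2 (subset_closure hxA)

/-- The map into the partial product induced by a partial map `v`. -/
def hfun (Y Z : Over X) (v : TopCat.of (Y.hom ⁻¹' A) ⟶ Z.left)
    (hv : ∀ y : (Y.hom ⁻¹' A : Set Y.left), Z.hom (v y) = Y.hom y.1) :
    Y.left → PT A Z := fun y =>
  if hy : Y.hom y ∈ A then Sum.inl ⟨v ⟨y, hy⟩, by rw [hv]; exact hy⟩
  else Sum.inr ⟨Y.hom y, hy⟩

lemma pmap_hfun (Y Z : Over X) (v) (hv) (y : Y.left) :
    pmap A Z (hfun A Y Z v hv y) = Y.hom y := by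
  unfold hfun
  split_ifs with hy
  · exact hv ⟨y, hy⟩
  · rfl

lemma hfun_continuous (hA : IsLocallyClosed A) (Y Z : Over X) (v) (hv) :
    Continuous (hfun A Y Z v hv) := by
  refine continuous_generateFrom_iff.mpr ?_
  rintro s (⟨W, hW, rfl⟩ | ⟨V, hV, rfl⟩)
  · obtain ⟨W', hW', hWW'⟩ :=
      isOpen_induced_iff.mp (v.hom.continuous.isOpen_preimage W hW)
    have : hfun A Y Z v hv ⁻¹' gen1 A Z W
        = (W' ∩ Y.hom ⁻¹' (coborder A)) ∪ Y.hom ⁻¹' (extPart A) := by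
      ext y
      simp only [mem_preimage, mem_union, mem_inter_iff]
      unfold hfun
      split_ifs with hy
      · rw [mem_gen1_inl]
        have h1 : (⟨y, hy⟩ : (Y.hom ⁻¹' A : Set Y.left)) ∈ v ⁻¹' W ↔ y ∈ W' := by
          rw [← hWW']; rfl
        constructor
        · intro hW
          exact Or.inl ⟨h1.mp hW, subset_coborder hy⟩
        · rintro (⟨h2, _⟩ | h3)
          · exact h1.mpr h2
          · exact absurd hy (extPart_disjoint A h3)
      · rw [mem_gen1_inr]
        constructor
        · intro h; exact Or.inr h
        · rintro (⟨_, h2⟩ | h3)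
          · exact mem_extPart_of_coborder A h2 hy
          · exact h3
    rw [this]
    exact ((hW'.inter (hA.isOpen_coborder.preimage Y.hom.hom.continuous)).union
      ((extPart_isOpen A hA).preimage Y.hom.hom.continuous))
  · have : hfun A Y Z v hv ⁻¹' (pmap A Z ⁻¹' V) = Y.hom ⁻¹' V := by
      ext y
      simp [mem_preimage, pmap_hfun]
    rw [this]
    exact hV.preimage Y.hom.hom.continuous

variable (i : TopCat.of A ⟶ X) (hi : ∀ a : A, i a = (a : X))
include hi

/-- Inclusion of the preimage subspace. -/
def preincl (Y : Over X) : TopCat.of (Y.hom ⁻¹' A) ⟶ Y.left :=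
  TopCat.ofHom (ContinuousMap.mk Subtype.val continuous_subtype_val)

/-- The map from the preimage subspace to `A`. -/
def toA (Y : Over X) : TopCat.of (Y.hom ⁻¹' A) ⟶ TopCat.of A :=
  TopCat.ofHom (ContinuousMap.mk (fun y => ⟨Y.hom y.1, y.2⟩)
    (Continuous.subtype_mk (Y.hom.hom.continuous.comp continuous_subtype_val) _))

/-- Comparison map into the categorical pullback. -/
def toPb (Y : Over X) : TopCat.of (Y.hom ⁻¹' A) ⟶ Limits.pullback Y.hom i :=
  pullback.lift (preincl A Y) (toA A Y) (by
    ext y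
    show Y.hom y.1 = i (toA A Y y)
    rw [hi]
    rfl)

lemma fst_mem (Y : Over X) (w : ↑(Limits.pullback Y.hom i)) :
    pullback.fst Y.hom i w ∈ Y.hom ⁻¹' A := by
  have h : Y.hom (pullback.fst Y.hom i w) = i (pullback.snd Y.hom i w) :=
    ConcreteCategory.congr_hom (pullback.condition (f := Y.hom) (g := i)) w
  show Y.hom (pullback.fst Y.hom i w) ∈ A
  rw [h, hi]
  exact (pullback.snd Y.hom i w).2

/-- Comparison map out of the categorical pullback. -/
def fromPb (Y : Over X) : Limits.pullback Y.hom i ⟶ TopCat.of (Y.hom ⁻¹' A) :=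
  TopCat.ofHom (ContinuousMap.mk
    (fun w => ⟨pullback.fst Y.hom i w, fst_mem A i hi Y w⟩)
    (Continuous.subtype_mk (pullback.fst Y.hom i).hom.continuous _))

lemma toPb_fromPb (Y : Over X) : toPb A i hi Y ≫ fromPb A i hi Y = 𝟙 _ := by
  ext y
  show pullback.fst Y.hom i (toPb A i hi Y y) = y.1
  have h2 : toPb A i hi Y ≫ pullback.fst Y.hom i = preincl A Y :=
    pullback.lift_fst _ _ _
  exact ConcreteCategory.congr_hom h2 y

lemma fromPb_toPb (Y : Over X) : fromPb A i hi Y ≫ toPb A i hi Y = 𝟙 _ := by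
  apply pullback.hom_ext
  · rw [Category.assoc, Category.id_comp, toPb, pullback.lift_fst]
    ext w
    rfl
  · rw [Category.assoc, Category.id_comp, toPb, pullback.lift_snd]
    ext w
    show Y.hom (pullback.fst Y.hom i w) = (pullback.snd Y.hom i w : A).1
    have h : Y.hom (pullback.fst Y.hom i w) = i (pullback.snd Y.hom i w) :=
      ConcreteCategory.congr_hom (pullback.condition (f := Y.hom) (g := i)) w
    rw [h, hi]

/-- The candidate right adjoint on objects. -/
def Robj (Z : Over X) : Over X := Over.mk (pHom A Z)

def vOf (Y Z : Over X) (u : (Over.pullback i ⋙ Over.map i).obj Y ⟶ Z) :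
    TopCat.of (Y.hom ⁻¹' A) ⟶ Z.left :=
  toPb A i hi Y ≫ u.left

lemma vOf_cond (Y Z : Over X) (u : (Over.pullback i ⋙ Over.map i).obj Y ⟶ Z)
    (y : (Y.hom ⁻¹' A : Set Y.left)) :
    Z.hom (vOf A i hi Y Z u y) = Y.hom y.1 := by
  have h1 : u.left ≫ Z.hom = pullback.snd Y.hom i ≫ i := Over.w u
  have h2 : toPb A i hi Y ≫ u.left ≫ Z.hom = toA A Y ≫ i := by
    rw [h1, ← Category.assoc, toPb, pullback.lift_snd]
  have h3 : Z.hom (u.left (toPb A i hi Y y)) = i (toA A Y y) :=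
    ConcreteCategory.congr_hom h2 y
  show Z.hom (u.left (toPb A i hi Y y)) = Y.hom y.1
  rw [h3, hi]
  rfl

def eFwd (hA : IsLocallyClosed A) (Y Z : Over X)
    (u : (Over.pullback i ⋙ Over.map i).obj Y ⟶ Z) : Y ⟶ Robj A Z :=
  Over.homMk
    (TopCat.ofHom (ContinuousMap.mk (hfun A Y Z (vOf A i hi Y Z u) (vOf_cond A i hi Y Z u))
      (hfun_continuous A hA Y Z _ _)))
    (by
      ext y
      exact pmap_hfun A Y Z (vOf A i hi Y Z u) (vOf_cond A i hi Y Z u) y)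

omit hi in
lemma pmap_hleft (Y Z : Over X) (h : Y ⟶ Robj A Z) (y : Y.left) :
    pmap A Z (h.left y) = Y.hom y :=
  ConcreteCategory.congr_hom (Over.w h) y

omit hi in
lemma hleft_mem (Y Z : Over X) (h : Y ⟶ Robj A Z) (y : (Y.hom ⁻¹' A : Set Y.left)) :
    pmap A Z (h.left y.1) ∈ A := by
  rw [pmap_hleft A Y Z h y.1]
  exact y.2

def kOf (Y Z : Over X) (h : Y ⟶ Robj A Z) :
    TopCat.of (Y.hom ⁻¹' A) ⟶ Z.left :=
  TopCat.ofHom (ContinuousMap.mk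
    (fun y => pext A Z ⟨h.left y.1, hleft_mem A Y Z h y⟩)
    ((pext_continuous A Z).comp
      (Continuous.subtype_mk ((h.left.hom.continuous).comp continuous_subtype_val) _)))

def eBwd (Y Z : Over X) (h : Y ⟶ Robj A Z) :
    (Over.pullback i ⋙ Over.map i).obj Y ⟶ Z :=
  Over.homMk (fromPb A i hi Y ≫ kOf A Y Z h)
    (by
      ext w
      show Z.hom ((kOf A Y Z h) ((fromPb A i hi Y) w)) = i (pullback.snd Y.hom i w)
      rw [kOf]
      show Z.hom (pext A Z ⟨h.left (pullback.fst Y.hom i w), _⟩) = i (pullback.snd Y.hom i w)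
      rw [Zhom_pext]
      show pmap A Z (h.left (pullback.fst Y.hom i w)) = i (pullback.snd Y.hom i w)
      rw [pmap_hleft A Y Z h]
      exact ConcreteCategory.congr_hom (pullback.condition (f := Y.hom) (g := i)) w)

omit hi in
lemma pext_eq (Z : Over X) (w : PT A Z) (hw : pmap A Z w ∈ A) (z : Z.left)
    (hz : Z.hom z ∈ A) (h : w = Sum.inl ⟨z, hz⟩) : pext A Z ⟨w, hw⟩ = z := by
  subst h
  rfl

omit hi in
lemma inl_eq (Z : Over X) (w : PT A Z) (hw : pmap A Z w ∈ A) (z : Z.left)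
    (hz : Z.hom z ∈ A) (hzw : z = pext A Z ⟨w, hw⟩) :
    (Sum.inl ⟨z, hz⟩ : PT A Z) = w := by
  subst hzw
  rcases w with (z' | x)
  · rfl
  · exact absurd hw x.2

omit hi in
lemma inr_eq (Z : Over X) (w : PT A Z) (x : X) (hx : x ∉ A) (hpx : pmap A Z w = x) :
    (Sum.inr ⟨x, hx⟩ : PT A Z) = w := by
  rcases w with (z | x')
  · exact absurd (hpx ▸ z.2) hx
  · exact congrArg Sum.inr (Subtype.ext hpx.symm)

omit hi in
lemma inl_congr (Z : Over X) (z z' : Z.left) (hz : Z.hom z ∈ A) (hz' : Z.hom z' ∈ A)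
    (h : z = z') : (Sum.inl ⟨z, hz⟩ : PT A Z) = Sum.inl ⟨z', hz'⟩ := by
  subst h
  rfl

omit hi in
lemma inr_congr (Z : Over X) (x x' : X) (hx : x ∉ A) (hx' : x' ∉ A)
    (h : x = x') : (Sum.inr ⟨x, hx⟩ : PT A Z) = Sum.inr ⟨x', hx'⟩ := by
  subst h
  rfl

/-- The hom-set equivalence. -/
def eEquiv (hA : IsLocallyClosed A) (Y Z : Over X) :
    ((Over.pullback i ⋙ Over.map i).obj Y ⟶ Z) ≃ (Y ⟶ Robj A Z) where
  toFun := eFwd A i hi hA Y Z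
  invFun := eBwd A i hi Y Z
  left_inv u := by
    apply Over.OverMorphism.ext
    have hk : kOf A Y Z (eFwd A i hi hA Y Z u) = toPb A i hi Y ≫ u.left := by
      ext y
      show pext A Z ⟨(eFwd A i hi hA Y Z u).left y.1, _⟩ = u.left (toPb A i hi Y y)
      refine pext_eq A Z _ _ _ ?_ ?_
      · have h4 : Z.hom (u.left ((toPb A i hi Y) y)) = Y.hom y.1 :=
          vOf_cond A i hi Y Z u y
        rw [h4]
        exact y.2
      · show hfun A Y Z (vOf A i hi Y Z u) (vOf_cond A i hi Y Z u) y.1 = _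
        unfold hfun
        rw [dif_pos (show Y.hom y.1 ∈ A from y.2)]
        exact inl_congr A Z _ _ _ _ rfl
    show fromPb A i hi Y ≫ kOf A Y Z (eFwd A i hi hA Y Z u) = u.left
    rw [hk, ← Category.assoc, fromPb_toPb, Category.id_comp]
  right_inv h := by
    apply Over.OverMorphism.ext
    ext y
    show hfun A Y Z (vOf A i hi Y Z (eBwd A i hi Y Z h))
      (vOf_cond A i hi Y Z (eBwd A i hi Y Z h)) y = h.left y
    unfold hfun
    split_ifs with hy
    · apply inl_eq A Z (h.left y) (by rw [pmap_hleft A Y Z h]; exact hy)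
      show (fromPb A i hi Y ≫ kOf A Y Z h) (toPb A i hi Y ⟨y, hy⟩) = _
      have h5 : toPb A i hi Y ≫ fromPb A i hi Y ≫ kOf A Y Z h = kOf A Y Z h := by
        rw [← Category.assoc, toPb_fromPb, Category.id_comp]
      have h6 := ConcreteCategory.congr_hom h5 (⟨y, hy⟩ : (Y.hom ⁻¹' A : Set Y.left))
      exact h6
    · exact inr_eq A Z (h.left y) _ hy (pmap_hleft A Y Z h y)

omit hi in
lemma restrict_mem (Y' Y : Over X) (f : Y' ⟶ Y) (y : (Y'.hom ⁻¹' A : Set Y'.left)) :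
    f.left y.1 ∈ Y.hom ⁻¹' A := by
  show Y.hom (f.left y.1) ∈ A
  have h1 : Y.hom (f.left y.1) = Y'.hom y.1 := ConcreteCategory.congr_hom (Over.w f) y.1
  rw [h1]
  exact y.2

/-- Restriction of an `Over` morphism to the preimage subspaces. -/
def restrict (Y' Y : Over X) (f : Y' ⟶ Y) :
    TopCat.of (Y'.hom ⁻¹' A) ⟶ TopCat.of (Y.hom ⁻¹' A) :=
  TopCat.ofHom (ContinuousMap.mk (fun y => ⟨f.left y.1, restrict_mem A Y' Y f y⟩)
    (Continuous.subtype_mk ((f.left.hom.continuous).comp continuous_subtype_val) _))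

lemma toPb_natural (Y' Y : Over X) (f : Y' ⟶ Y) :
    toPb A i hi Y' ≫ ((Over.pullback i ⋙ Over.map i).map f).left
      = restrict A Y' Y f ≫ toPb A i hi Y := by
  have hl : ((Over.pullback i ⋙ Over.map i).map f).left = ((Over.pullback i).map f).left := by
    rw [Functor.comp_map, Over.map_map_left]
  apply pullback.hom_ext
  · simp only [Category.assoc, hl, Over.pullback_map_left, toPb, pullback.lift_fst,
      pullback.lift_fst_assoc, pullback.lift_snd, pullback.lift_snd_assoc]
    ext y
    rfl
  · simp only [Category.assoc, hl, Over.pullback_map_left, toPb, pullback.lift_fst,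
      pullback.lift_fst_assoc, pullback.lift_snd, pullback.lift_snd_assoc]
    ext y
    show Y'.hom y.1 = Y.hom (f.left y.1)
    exact (ConcreteCategory.congr_hom (Over.w f) y.1).symm

lemma eEquiv_natural (hA : IsLocallyClosed A) (Y' Y Z : Over X) (f : Y' ⟶ Y)
    (u : (Over.pullback i ⋙ Over.map i).obj Y ⟶ Z) :
    eEquiv A i hi hA Y' Z ((Over.pullback i ⋙ Over.map i).map f ≫ u)
      = f ≫ eEquiv A i hi hA Y Z u := by
  apply Over.OverMorphism.ext
  ext y
  show hfun A Y' Z (vOf A i hi Y' Z ((Over.pullback i ⋙ Over.map i).map f ≫ u))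
      (vOf_cond A i hi Y' Z _) y
    = hfun A Y Z (vOf A i hi Y Z u) (vOf_cond A i hi Y Z u) (f.left y)
  unfold hfun
  by_cases hy : Y'.hom y ∈ A
  · rw [dif_pos hy, dif_pos (show Y.hom (f.left y) ∈ A from restrict_mem A Y' Y f ⟨y, hy⟩)]
    refine inl_congr A Z _ _ _ _ ?_
    have h8 := ConcreteCategory.congr_hom (toPb_natural A i hi Y' Y f)
      (⟨y, hy⟩ : (Y'.hom ⁻¹' A : Set Y'.left))
    exact congrArg u.left h8
  · rw [dif_neg hy, dif_neg (show ¬ Y.hom (f.left y) ∈ A from by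
      rw [show Y.hom (f.left y) = Y'.hom y from ConcreteCategory.congr_hom (Over.w f) y]
      exact hy)]
    exact inr_congr A Z _ _ _ _ (ConcreteCategory.congr_hom (Over.w f) y).symm

end LCExp

open CategoryTheory

/-- The inclusion of a locally closed subspace `A → X`
(`A` an intersection of an open and a closed set) is an exponentiable morphism
in `Top`: the functor `− ×_X A : Top/X → Top/X` has a right adjoint. -/
theorem locallyClosed_inclusion_exponentiable
    (X : TopCat) (A : Set X) (hA : IsLocallyClosed A)
    (i : TopCat.of A ⟶ X)
    (hi : ∀ a : A, i a = (a : X)) :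
    (Over.pullback i ⋙ Over.map i).IsLeftAdjoint :=
  (CategoryTheory.Adjunction.adjunctionOfEquivRight
    (fun Y Z => eEquiv A i hi hA Y Z)
    (fun Y' Y Z f u => eEquiv_natural A i hi hA Y' Y Z f u)).isLeftAdjoint
end
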